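/- Let Δ ∈ ℝ, and for θ ∈ ℝ set a(θ) = (θ - Δ)/2 and c(θ) = (θ + Δ)/2. Let b_n(θ) and u_n(θ) be the even-case para-Racah recurrence coefficients with parameters a = a(θ), c = c(θ) and α = 1/2. Then as θ → +∞: for every n ∈ {0,…,N}, -(2 b_n(θ) + 2 a(θ)²)/θ tends to (N - 1 + 2Δ)/2 + ((2Δ-1)(N+1)/4)·(1/(2n-N-1) - 1/(2n-N+1)); and for every n ∈ {1,…,N}, 4 u_n(θ)/θ² tends to n(N+1-n)(2n-N-2Δ)(2n-N-2+2Δ)/(4(2n-N-1)²). -/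

import Mathlib

open Filter Topology Polynomial

noncomputable section

/-- The recurrence coefficient `bₙ` of the para-Racah polynomials, even case `N = 2j`. -/
def bEven (j : ℕ) (a c : ℝ) (n : ℕ) : ℝ :=
  ((n : ℝ) - 2 * j) * ((n : ℝ) + a + c) * ((n : ℝ) + a - c - j + 1) /
      (2 * (2 * (n : ℝ) + 1 - 2 * j)) +
    (n : ℝ) * ((n : ℝ) - 2 * j - a - c) * ((n : ℝ) - j - 1 + c - a) /
      (2 * (2 * (n : ℝ) - 1 - 2 * j)) - a ^ 2

/-- The recurrence coefficient `uₙ` of the para-Racah polynomials, even case `N = 2j`. -/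
def uEven (j : ℕ) (a c α : ℝ) (n : ℕ) : ℝ :=
  if n = j then
    -(1 - α) * (j : ℝ) * ((j : ℝ) + 1) * (a - c) * (a - c + 1) * (a + c + j - 1) * (a + c + j) / 2
  else if n = j + 1 then
    -α * (j : ℝ) * ((j : ℝ) + 1) * (a - c) * (a - c + 1) * (a + c + j - 1) * (a + c + j) / 2
  else
    (n : ℝ) * (2 * (j : ℝ) - n + 1) * (a + c + n - 1) * (a - c + j - n + 1)
        * (-a + c + j - n) * (a + c + 2 * j - n) /
      (4 * (2 * (j : ℝ) - 2 * n + 1) ^ 2)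

/-- Helper decomposition for the quadratic-over-quadratic case. -/
lemma uEven_decomp (P d p q θ : ℝ) (hd : d ≠ 0) (hθ : θ ≠ 0) :
    4 * (P * (θ + p) * (θ + q) / (4 * d)) / θ ^ 2 =
      P / d + P / d * (p + q) * θ⁻¹ + P / d * (p * q) * θ⁻¹ ^ 2 := by
  field_simp
  ring

/-- Helper: a function eventually equal to `K + A₁/θ + A₂/θ²` tends to `K` at `+∞`. -/
lemma tendsto_aux (K A1 A2 L : ℝ) (f : ℝ → ℝ) (hL : K = L)
    (hev : ∀ θ : ℝ, θ ≠ 0 → f θ = K + A1 * θ⁻¹ + A2 * θ⁻¹ ^ 2) :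
    Tendsto f atTop (𝓝 L) := by
  have h : Tendsto (fun θ : ℝ => K + A1 * θ⁻¹ + A2 * θ⁻¹ ^ 2) atTop
      (𝓝 (K + A1 * 0 + A2 * 0 ^ 2)) :=
    (tendsto_const_nhds.add (tendsto_inv_atTop_zero.const_mul A1)).add
      ((tendsto_inv_atTop_zero.pow 2).const_mul A2)
  have h0 : K + A1 * 0 + A2 * 0 ^ 2 = L := by simp [hL]
  rw [h0] at h
  refine Tendsto.congr' ?_ h
  filter_upwards [eventually_ne_atTop (0 : ℝ)] with θ hθ using (hev θ hθ).symm

theorem paraRacahEven_to_paraKrawtchouk (j : ℕ) (hj : 1 ≤ j) (Δ : ℝ) :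
    (∀ n : ℕ, n ≤ 2 * j →
      Tendsto (fun θ : ℝ =>
          -(2 * bEven j ((θ - Δ) / 2) ((θ + Δ) / 2) n + 2 * ((θ - Δ) / 2) ^ 2) / θ)
        atTop (𝓝 (((2 * (j : ℝ)) - 1 + 2 * Δ) / 2 +
          (2 * Δ - 1) * ((2 * (j : ℝ)) + 1) / 4 *
            (1 / (2 * (n : ℝ) - (2 * (j : ℝ)) - 1) - 1 / (2 * (n : ℝ) - (2 * (j : ℝ)) + 1))))) ∧
    (∀ n : ℕ, 1 ≤ n → n ≤ 2 * j →
      Tendsto (fun θ : ℝ =>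
          4 * uEven j ((θ - Δ) / 2) ((θ + Δ) / 2) (1 / 2) n / θ ^ 2)
        atTop (𝓝 ((n : ℝ) * ((2 * (j : ℝ)) + 1 - n)
          * (2 * (n : ℝ) - (2 * (j : ℝ)) - 2 * Δ)
          * (2 * (n : ℝ) - (2 * (j : ℝ)) - 2 + 2 * Δ) /
          (4 * (2 * (n : ℝ) - (2 * (j : ℝ)) - 1) ^ 2)))) := by
  constructor
  · intro n hn
    have hne1 : (2 * (n : ℝ) + 1 - 2 * j) ≠ 0 := by
      intro h
      have h' : ((2 * n + 1 : ℕ) : ℝ) = ((2 * j : ℕ) : ℝ) := by push_cast; linarith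
      have := Nat.cast_injective h'
      omega
    have hne2 : (2 * (n : ℝ) - 1 - 2 * j) ≠ 0 := by
      intro h
      have h' : ((2 * j + 1 : ℕ) : ℝ) = ((2 * n : ℕ) : ℝ) := by push_cast; linarith
      have := Nat.cast_injective h'
      omega
    have hne3 : (2 * (n : ℝ) - 2 * j - 1) ≠ 0 := fun h => hne2 (by linarith)
    have hne4 : (2 * (n : ℝ) - 2 * j + 1) ≠ 0 := fun h => hne1 (by linarith)
    set x : ℝ := (n : ℝ)
    set J : ℝ := (j : ℝ)
    refine tendsto_aux
      (-(x - 2 * J) * (x - Δ - J + 1) / (2 * x + 1 - 2 * J)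
        + x * (x - J - 1 + Δ) / (2 * x - 1 - 2 * J))
      (-x * (x - 2 * J) * (x - Δ - J + 1) / (2 * x + 1 - 2 * J)
        - x * (x - 2 * J) * (x - J - 1 + Δ) / (2 * x - 1 - 2 * J))
      0 _ _ ?_ ?_
    · rw [show 2 * x - 2 * J - 1 = 2 * x - 1 - 2 * J by ring, show 2 * x - 2 * J + 1 = 2 * x + 1 - 2 * J by ring]
      have h1 : x * 2 + 1 - 2 * J ≠ 0 := by rwa [mul_comm]
      have h2 : x * 2 - 1 - 2 * J ≠ 0 := by rwa [mul_comm]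
      field_simp
      ring
    · intro θ hθ
      simp only [bEven]
      rw [show (n : ℝ) = x from rfl, show (j : ℝ) = J from rfl]
      field_simp
      ring
  · intro n hn1 hn2
    have hne0 : (2 * (j : ℝ) - 2 * n + 1) ≠ 0 := by
      intro h
      have h' : ((2 * j + 1 : ℕ) : ℝ) = ((2 * n : ℕ) : ℝ) := by push_cast; linarith
      have := Nat.cast_injective h'
      omega
    have hne3 : (2 * (n : ℝ) - 2 * j - 1) ≠ 0 := fun h => hne0 (by linarith)
    set x : ℝ := (n : ℝ)
    set J : ℝ := (j : ℝ)
    rcases eq_or_ne n j with rfl | hnj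
    · have hx : x = J := rfl
      refine tendsto_aux (J * (J + 1) * Δ * (1 - Δ))
        (J * (J + 1) * Δ * (1 - Δ) * (2 * J - 1))
        (J * (J + 1) * Δ * (1 - Δ) * ((J - 1) * J)) _ _ ?_ ?_
      · rw [hx]; field_simp; ring
      · intro θ hθ
        rw [uEven, if_pos rfl]
        field_simp
        ring
    · rcases eq_or_ne n (j + 1) with rfl | hnj1
      · have hx : x = J + 1 := by simp [x, J]
        refine tendsto_aux (J * (J + 1) * Δ * (1 - Δ))
          (J * (J + 1) * Δ * (1 - Δ) * (2 * J - 1))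
          (J * (J + 1) * Δ * (1 - Δ) * ((J - 1) * J)) _ _ ?_ ?_
        · rw [hx]; field_simp; ring
        · intro θ hθ
          rw [uEven, if_neg hnj, if_pos rfl]
          field_simp
          ring
      · refine tendsto_aux
          (x * (2 * J - x + 1) * (J - x + 1 - Δ) * (Δ + J - x) / (2 * J - 2 * x + 1) ^ 2)
          (x * (2 * J - x + 1) * (J - x + 1 - Δ) * (Δ + J - x) / (2 * J - 2 * x + 1) ^ 2
            * (2 * J - 1))
          (x * (2 * J - x + 1) * (J - x + 1 - Δ) * (Δ + J - x) / (2 * J - 2 * x + 1) ^ 2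
            * ((x - 1) * (2 * J - x))) _ _ ?_ ?_
        · field_simp
          ring
        · intro θ hθ
          simp only [uEven, if_neg hnj, if_neg hnj1]
          have hd : ((2 * J - 2 * x + 1) ^ 2) ≠ 0 := pow_ne_zero _ hne0
          linear_combination uEven_decomp
            (x * (2 * J - x + 1) * (J - x + 1 - Δ) * (Δ + J - x))
            ((2 * J - 2 * x + 1) ^ 2) (x - 1) (2 * J - x) θ hd hθ
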